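/- There exists a finite instance with two groups and two solutions where the exact leximax solution and an element-wise-close alternative diverge: with utilities u(S_1,G_1) = 0, u(S_1,G_2) = 1, u(S_2,G_1) = u(S_2,G_2) = 1/100, the unique leximax solution is S_2 (its sorted utility vector (1/100, 1/100) is lexicographically greater than (0,1)), yet S_1 is ε-tradeoff approximate leximax for any ε ≥ 1/100. -/

import Mathlib

open scoped Classical

/-- The vector of the values of `w` sorted in nondecreasing order;
`sortedVec m w i` is the `i`-th smallest value of `w`. -/
noncomputable def sortedVec (m : ℕ) (w : Fin m → ℝ) : Fin m → ℝ :=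
  fun i => ((Finset.univ.val.map w).sort (· ≤ ·)).get ⟨i.1, by simp⟩

/-- Lexicographic order on `ℝ^m`: `lexLE m v u` means `v ⪯ u`, i.e. either `v = u`
or at the first coordinate where they differ, `u` is strictly larger. -/
def lexLE (m : ℕ) (v u : Fin m → ℝ) : Prop :=
  v = u ∨ ∃ i : Fin m, (∀ j < i, v j = u j) ∧ v i < u i

/-- The recursively defined sets `S_i^α`: `S_0^α = S` and `S_i^α` keeps those solutions of
`S_{i-1}^α` whose `i`-th smallest group utility is within `α_i` of the maximum `i`-th smallest
group utility over `S_{i-1}^α` (expressed as: at least every other value minus `α_i`). -/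
noncomputable def recSets {σ : Type*} (m : ℕ) (S : Finset σ)
    (u : σ → Fin m → ℝ) (α : Fin m → ℝ) : ℕ → Finset σ
  | 0 => S
  | (i+1) =>
    if h : i < m then
      (recSets m S u α i).filter (fun s => ∀ t ∈ recSets m S u α i,
        sortedVec m (u s) ⟨i, h⟩ ≥ sortedVec m (u t) ⟨i, h⟩ - α ⟨i, h⟩)
    else recSets m S u α i


/-- The instance of Example 1: two groups, two solutions. -/
noncomputable def exU18 : Fin 2 → Fin 2 → ℝ := ![![0, 1], ![1/100, 1/100]]

lemma sort_two (w : Fin 2 → ℝ) (h : w 0 ≤ w 1) :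
    (Finset.univ.val.map w).sort (· ≤ ·) = [w 0, w 1] := by
  have hm : Finset.univ.val.map w = (([w 0, w 1] : List ℝ) : Multiset ℝ) := rfl
  apply List.Perm.eq_of_pairwise' (Multiset.pairwise_sort _ _) ?_ (by
    rw [← Multiset.coe_eq_coe, Multiset.sort_eq, hm])
  simp [List.pairwise_cons, h]

lemma sortedVec_two (w : Fin 2 → ℝ) (h : w 0 ≤ w 1) :
    sortedVec 2 w 0 = w 0 ∧ sortedVec 2 w 1 = w 1 := by
  unfold sortedVec
  rw [List.get_of_eq (sort_two w h), List.get_of_eq (sort_two w h)]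
  exact ⟨rfl, rfl⟩

lemma exU18_zero : sortedVec 2 (exU18 0) 0 = 0 ∧ sortedVec 2 (exU18 0) 1 = 1 := by
  have := sortedVec_two (exU18 0) (by norm_num [exU18])
  simpa [exU18] using this

lemma exU18_one : sortedVec 2 (exU18 1) 0 = 1/100 ∧ sortedVec 2 (exU18 1) 1 = 1/100 := by
  have := sortedVec_two (exU18 1) (by norm_num [exU18])
  simpa [exU18] using this

/-- Example 1: solution `S₂` (index 1) is the unique leximax solution, its sorted vector
`(1/100, 1/100)` being strictly lexicographically greater than `(0, 1)`; yet `S₁`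
(index 0) is ε-tradeoff approximate leximax for every ε ≥ 1/100. -/
theorem leximax_sensitivity_example :
    (∀ s : Fin 2, lexLE 2 (sortedVec 2 (exU18 s)) (sortedVec 2 (exU18 1))) ∧
    sortedVec 2 (exU18 0) ≠ sortedVec 2 (exU18 1) ∧
    (∀ ε : ℝ, 1/100 ≤ ε → ∀ s' : Fin 2, ∀ i : Fin 2,
      sortedVec 2 (exU18 s') i > sortedVec 2 (exU18 0) i + ε →
      ∃ j < i, sortedVec 2 (exU18 0) j > sortedVec 2 (exU18 s') j) := by
  obtain ⟨h00, h01⟩ := exU18_zero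
  obtain ⟨h10, h11⟩ := exU18_one
  refine ⟨?_, ?_, ?_⟩
  · intro s
    fin_cases s
    · refine Or.inr ⟨0, fun j hj => by simp [Fin.lt_def] at hj, ?_⟩
      show sortedVec 2 (exU18 0) 0 < sortedVec 2 (exU18 1) 0
      rw [h00, h10]; norm_num
    · exact Or.inl rfl
  · intro h
    have := congrFun h 0
    rw [h00, h10] at this
    norm_num at this
  · intro ε hε s' i hgt
    exfalso
    fin_cases s' <;> fin_cases i <;>
      [ (rw [show sortedVec 2 (exU18 ⟨0, by omega⟩) (⟨0, by omega⟩ : Fin 2) = 0 from h00] at hgt);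
        (rw [show sortedVec 2 (exU18 ⟨0, by omega⟩) (⟨1, by omega⟩ : Fin 2) = 1 from h01,
             show sortedVec 2 (exU18 0) (⟨1, by omega⟩ : Fin 2) = 1 from h01] at hgt);
        (rw [show sortedVec 2 (exU18 ⟨1, by omega⟩) (⟨0, by omega⟩ : Fin 2) = 1/100 from h10] at hgt);
        (rw [show sortedVec 2 (exU18 ⟨1, by omega⟩) (⟨1, by omega⟩ : Fin 2) = 1/100 from h11,
             show sortedVec 2 (exU18 0) (⟨1, by omega⟩ : Fin 2) = 1 from h01] at hgt)] <;>
      first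
        | (rw [show sortedVec 2 (exU18 0) (⟨0, by omega⟩ : Fin 2) = 0 from h00] at hgt; linarith)
        | linarith
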